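/- C_{n,h}(x_0,...,x_{n-1}; y_0,...,y_{n-1}) = 0 if and only if y_j = ∑_{i=j}^{n-1} h^{i-j}/(i-j)! · x_i for all j = 0, ..., n-1. -/

import Mathlib

open Finset intervalIntegral

section Helpers

variable {E : Type*} [NormedAddCommGroup E] [NormedSpace ℝ E]

/-- Truncated Taylor-type polynomial curve based at `a` with coefficients `c`. -/
noncomputable def pser (a : ℝ) (c : ℕ → E) (n : ℕ) (t : ℝ) : E :=
  ∑ i ∈ Finset.range n, ((t - a) ^ i / (Nat.factorial i : ℝ)) • c i

lemma pser_hasDerivAt (a : ℝ) (c : ℕ → E) (n : ℕ) (t : ℝ) :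
    HasDerivAt (pser a c n) (pser a (fun i => c (i + 1)) (n - 1) t) t := by
  cases n with
  | zero =>
    have hp0 : pser a c 0 = fun _ => (0:E) := by funext s; simp [pser]
    rw [hp0]; simpa [pser] using hasDerivAt_const t (0 : E)
  | succ m =>
    have h1 : ∀ i ∈ Finset.range (m + 1),
        HasDerivAt (fun t : ℝ => ((t - a) ^ i / (Nat.factorial i : ℝ)) • c i)
          (((i : ℝ) * (t - a) ^ (i - 1) * 1 / (Nat.factorial i : ℝ)) • c i) t := fun i _ =>
      ((((hasDerivAt_id t).sub_const a).pow i).div_const _).smul_const (c i)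
    have h2 := HasDerivAt.fun_sum h1
    convert h2 using 1
    case e'_8 => rfl
    rw [Finset.sum_range_succ']
    simp only [Nat.cast_zero, zero_mul, zero_div, zero_smul, add_zero, Nat.succ_sub_one, pser]
    refine Finset.sum_congr rfl fun i _ => ?_
    congr 1
    have hfac : (Nat.factorial (i + 1) : ℝ) = (i + 1) * (Nat.factorial i : ℝ) := by
      push_cast [Nat.factorial_succ]; ring
    rw [hfac]
    have : ((i : ℝ) + 1) ≠ 0 := by positivity
    have hf : (Nat.factorial i : ℝ) ≠ 0 := by positivity
    field_simp
    push_cast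
    ring

lemma iteratedDeriv_pser (a : ℝ) (c : ℕ → E) (n k : ℕ) :
    iteratedDeriv k (pser a c n) = pser a (fun i => c (i + k)) (n - k) := by
  induction k with
  | zero => simp [iteratedDeriv_zero]
  | succ k ih =>
    rw [iteratedDeriv_succ, ih]
    funext t
    rw [(pser_hasDerivAt a _ (n - k) t).deriv]
    simp only [pser, Nat.sub_sub]
    refine Finset.sum_congr rfl fun i _ => ?_
    congr 2
    omega

lemma contDiff_pser (a : ℝ) (c : ℕ → E) (n : ℕ) {m : WithTop ℕ∞} :
    ContDiff ℝ m (pser a c n) := by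
  unfold pser
  refine ContDiff.sum fun i _ => ContDiff.smul ?_ contDiff_const
  exact (((contDiff_id.sub contDiff_const).pow i).div_const _)

lemma pser_self (a : ℝ) (c : ℕ → E) (n : ℕ) (hn : 1 ≤ n) : pser a c n a = c 0 := by
  unfold pser
  rw [Finset.sum_eq_single 0]
  · simp
  · intro i _ hi; simp [sub_self, zero_pow hi]
  · intro hmem; exact absurd (Finset.mem_range.2 hn) hmem

omit [NormedSpace ℝ E] in
lemma telescope_sum (u w : ℕ → E) (m : ℕ) (hm : 1 ≤ m) (hw0 : w 0 = 0)
    (hws : ∀ i, w (i + 1) = -u i) : ∑ i ∈ Finset.range m, (u i + w i) = u (m - 1) := by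
  obtain ⟨k, rfl⟩ : ∃ k, m = k + 1 := ⟨m - 1, (Nat.succ_pred_eq_of_pos hm).symm⟩
  rw [Finset.sum_add_distrib, Finset.sum_range_succ' (fun i => w i) k, hw0]
  simp only [hws]
  rw [Finset.sum_range_succ u k, Finset.sum_neg_distrib]
  simp only [Nat.add_sub_cancel]
  abel

lemma sum_if_reindex (h : ℝ) (f : ℕ → E) (j n : ℕ) (hj : j < n) :
    (∑ i ∈ Finset.range n,
      if j ≤ i then (h ^ (i - j) / ((i - j).factorial : ℝ)) • f i else 0) =
      ∑ i ∈ Finset.range (n - j), (h ^ i / (Nat.factorial i : ℝ)) • f (j + i) := by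
  have step1 : (∑ i ∈ Finset.range n,
      if j ≤ i then (h ^ (i - j) / ((i - j).factorial : ℝ)) • f i else 0) =
      ∑ i ∈ Finset.Ico j n, (h ^ (i - j) / ((i - j).factorial : ℝ)) • f i := by
    rw [Finset.range_eq_Ico, ← Finset.sum_Ico_consecutive _ (Nat.zero_le j) hj.le]
    rw [Finset.sum_eq_zero (fun i hi => if_neg (by simp at hi; omega)), zero_add]
    exact Finset.sum_congr rfl fun i hi => if_pos (by simp at hi; omega)
  rw [step1, Finset.sum_Ico_eq_sum_range]
  exact Finset.sum_congr rfl fun i _ => by rw [Nat.add_sub_cancel_left]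

lemma fin_target_eq (h : ℝ) {n : ℕ} (x : Fin n → E) (j : Fin n) :
    (∑ i : Fin n, if (j : ℕ) ≤ (i : ℕ) then
        (h ^ ((i : ℕ) - (j : ℕ)) / (((i : ℕ) - (j : ℕ)).factorial : ℝ)) • x i else 0)
      = ∑ i ∈ Finset.range (n - (j : ℕ)), (h ^ i / (Nat.factorial i : ℝ)) •
          (if hk : (j : ℕ) + i < n then x ⟨(j : ℕ) + i, hk⟩ else 0) := by
  have h1 : (∑ i : Fin n, if (j : ℕ) ≤ (i : ℕ) then
        (h ^ ((i : ℕ) - (j : ℕ)) / (((i : ℕ) - (j : ℕ)).factorial : ℝ)) • x i else 0)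
      = ∑ i : Fin n, (fun k : ℕ => if (j : ℕ) ≤ k then
          (h ^ (k - (j : ℕ)) / ((k - (j : ℕ)).factorial : ℝ)) •
            (if hk : k < n then x ⟨k, hk⟩ else 0) else 0) (i : ℕ) := by
    refine Finset.sum_congr rfl fun i _ => ?_
    simp [i.isLt]
  have h2 := Fin.sum_univ_eq_sum_range (fun k : ℕ => if (j : ℕ) ≤ k then
      (h ^ (k - (j : ℕ)) / ((k - (j : ℕ)).factorial : ℝ)) •
        (if hk : k < n then x ⟨k, hk⟩ else 0) else 0) n
  rw [h1, h2, sum_if_reindex h _ (j : ℕ) n j.isLt]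

lemma taylor_int [CompleteSpace E] (n : ℕ) (h : ℝ) (ξ : ℝ → E) (hξ : ContDiff ℝ n ξ)
    (j : ℕ) (hj : j < n) :
    iteratedDeriv j ξ h - ∑ i ∈ Finset.range (n - j),
        (h ^ i / (Nat.factorial i : ℝ)) • iteratedDeriv (j + i) ξ 0
      = ∫ t in (0:ℝ)..h,
          ((h - t) ^ (n - j - 1) / ((n - j - 1).factorial : ℝ)) • iteratedDeriv n ξ t := by
  set m := n - j with hm
  have hm1 : 1 ≤ m := by omega
  set G : ℝ → E := fun t => ∑ i ∈ Finset.range m,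
    ((h - t) ^ i / (Nat.factorial i : ℝ)) • iteratedDeriv (j + i) ξ t with hG
  have hGd : ∀ t : ℝ, HasDerivAt G
      (((h - t) ^ (m - 1) / ((m - 1).factorial : ℝ)) • iteratedDeriv n ξ t) t := by
    intro t
    have hterm : ∀ i ∈ Finset.range m,
        HasDerivAt (fun t : ℝ => ((h - t) ^ i / (Nat.factorial i : ℝ)) • iteratedDeriv (j + i) ξ t)
          ((((h - t) ^ i / (Nat.factorial i : ℝ)) • iteratedDeriv (j + i + 1) ξ t)
            + (((i : ℝ) * (h - t) ^ (i - 1) * (0 - 1) / (Nat.factorial i : ℝ)) •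
                iteratedDeriv (j + i) ξ t)) t := by
      intro i hi
      have hii : j + i < n := by simp at hi; omega
      have hs : HasDerivAt (fun t : ℝ => (h - t) ^ i / (Nat.factorial i : ℝ))
          ((i : ℝ) * (h - t) ^ (i - 1) * (0 - 1) / (Nat.factorial i : ℝ)) t :=
        (((hasDerivAt_const t h).sub (hasDerivAt_id t)).pow i).div_const _
      have hv : HasDerivAt (iteratedDeriv (j + i) ξ) (iteratedDeriv (j + i + 1) ξ t) t := by
        have hd := (hξ.differentiable_iteratedDeriv (j + i)
          (by exact_mod_cast Nat.cast_lt.mpr hii)).differentiableAt (x := t)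
        have := hd.hasDerivAt
        rwa [← iteratedDeriv_succ] at this
      exact hs.smul hv
    have hsum := HasDerivAt.fun_sum hterm
    have heq : (∑ i ∈ Finset.range m,
        ((((h - t) ^ i / (Nat.factorial i : ℝ)) • iteratedDeriv (j + i + 1) ξ t)
          + (((i : ℝ) * (h - t) ^ (i - 1) * (0 - 1) / (Nat.factorial i : ℝ)) •
              iteratedDeriv (j + i) ξ t)))
        = ((h - t) ^ (m - 1) / ((m - 1).factorial : ℝ)) • iteratedDeriv n ξ t := by
      have hws : ∀ i : ℕ,
          (((i + 1 : ℕ) : ℝ) * (h - t) ^ (i + 1 - 1) * (0 - 1) / (Nat.factorial (i + 1) : ℝ)) •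
              iteratedDeriv (j + (i + 1)) ξ t
            = -(((h - t) ^ i / (Nat.factorial i : ℝ)) • iteratedDeriv (j + i + 1) ξ t) := by
        intro i
        rw [← neg_smul]
        have harg : j + (i + 1) = j + i + 1 := by omega
        rw [harg]
        congr 1
        have hfac : (Nat.factorial (i + 1) : ℝ) = ((i : ℝ) + 1) * (Nat.factorial i : ℝ) := by
          push_cast [Nat.factorial_succ]; ring
        have h1 : ((i : ℝ) + 1) ≠ 0 := by positivity
        have h2 : (Nat.factorial i : ℝ) ≠ 0 := by positivity
        push_cast [hfac]
        field_simp
        ring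
      rw [telescope_sum
        (fun i => ((h - t) ^ i / (Nat.factorial i : ℝ)) • iteratedDeriv (j + i + 1) ξ t)
        (fun i => ((i : ℝ) * (h - t) ^ (i - 1) * (0 - 1) / (Nat.factorial i : ℝ)) •
            iteratedDeriv (j + i) ξ t) m hm1 (by simp) hws]
      have hjm : j + (m - 1) + 1 = n := by omega
      rw [hjm]
    rw [heq] at hsum
    exact hsum
  have hcont : Continuous (fun t : ℝ =>
      ((h - t) ^ (m - 1) / ((m - 1).factorial : ℝ)) • iteratedDeriv n ξ t) :=
    (((continuous_const.sub continuous_id).pow _).div_const _).smul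
      (hξ.continuous_iteratedDeriv n le_rfl)
  rw [intervalIntegral.integral_eq_sub_of_hasDerivAt (fun t _ => hGd t)
    (hcont.intervalIntegrable _ _)]
  have hGh : G h = iteratedDeriv j ξ h := by
    simp only [hG]
    rw [Finset.sum_eq_single 0]
    · simp
    · intro i _ hi; simp [sub_self, zero_pow hi]
    · intro hmem; exact absurd (Finset.mem_range.2 hm1) hmem
  have hG0 : G 0 = ∑ i ∈ Finset.range m,
      (h ^ i / (Nat.factorial i : ℝ)) • iteratedDeriv (j + i) ξ 0 := by
    simp [hG]
  rw [hGh, hG0]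

lemma key_bound [CompleteSpace E] (g : ℝ → E) (hg : Continuous g) (h δ : ℝ)
    (hh : 0 < h) (hδ : 0 < δ) (p : ℕ) :
    ‖∫ t in (0:ℝ)..h, ((h - t) ^ p / (p.factorial : ℝ)) • g t‖ ≤
      (h ^ p / (p.factorial : ℝ)) / (2 * δ) * (∫ t in (0:ℝ)..h, ‖g t‖ ^ 2) +
      (h ^ p / (p.factorial : ℝ)) * δ / 2 * h := by
  set K : ℝ := h ^ p / (p.factorial : ℝ) with hK
  have hKpos : 0 < K := by positivity
  have hcont : Continuous fun t : ℝ => ((h - t) ^ p / (p.factorial : ℝ)) • g t :=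
    (((continuous_const.sub continuous_id).pow _).div_const _).smul hg
  have step1 : ‖∫ t in (0:ℝ)..h, ((h - t) ^ p / (p.factorial : ℝ)) • g t‖ ≤
      ∫ t in (0:ℝ)..h, ‖((h - t) ^ p / (p.factorial : ℝ)) • g t‖ :=
    intervalIntegral.norm_integral_le_integral_norm hh.le
  have step2 : (∫ t in (0:ℝ)..h, ‖((h - t) ^ p / (p.factorial : ℝ)) • g t‖) ≤
      ∫ t in (0:ℝ)..h, (K / (2 * δ) * ‖g t‖ ^ 2 + K * δ / 2) := by
    apply intervalIntegral.integral_mono_on hh.le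
    · exact (hcont.norm.intervalIntegrable _ _)
    · exact ((((continuous_const.mul (hg.norm.pow 2))).add continuous_const).intervalIntegrable _ _)
    · intro t ht
      obtain ⟨ht0, hth⟩ := ht
      rw [norm_smul, Real.norm_eq_abs]
      have h1 : |(h - t) ^ p / (p.factorial : ℝ)| ≤ K := by
        rw [abs_div, abs_pow, abs_of_nonneg (by linarith : (0:ℝ) ≤ h - t),
          abs_of_pos (by positivity : (0:ℝ) < (p.factorial : ℝ))]
        exact div_le_div_of_nonneg_right (pow_le_pow_left₀ (by linarith) (by linarith) p)
          (by positivity)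
      have h2 : ‖g t‖ ≤ ‖g t‖ ^ 2 / (2 * δ) + δ / 2 := by
        rw [← sub_nonneg]
        have hrw : ‖g t‖ ^ 2 / (2 * δ) + δ / 2 - ‖g t‖ = (‖g t‖ - δ) ^ 2 / (2 * δ) := by
          field_simp; ring
        rw [hrw]; positivity
      calc |(h - t) ^ p / (p.factorial : ℝ)| * ‖g t‖ ≤ K * (‖g t‖ ^ 2 / (2 * δ) + δ / 2) :=
            mul_le_mul h1 h2 (norm_nonneg _) hKpos.le
        _ = K / (2 * δ) * ‖g t‖ ^ 2 + K * δ / 2 := by field_simp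
  have step3 : (∫ t in (0:ℝ)..h, (K / (2 * δ) * ‖g t‖ ^ 2 + K * δ / 2)) =
      K / (2 * δ) * (∫ t in (0:ℝ)..h, ‖g t‖ ^ 2) + K * δ / 2 * h := by
    rw [intervalIntegral.integral_add (f := fun t => K / (2 * δ) * ‖g t‖ ^ 2)
      (((continuous_const.mul (hg.norm.pow 2))).intervalIntegrable _ _)
      (intervalIntegrable_const), intervalIntegral.integral_const_mul,
      intervalIntegral.integral_const]
    simp [smul_eq_mul]
    ring
  calc ‖∫ t in (0:ℝ)..h, ((h - t) ^ p / (p.factorial : ℝ)) • g t‖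
      ≤ ∫ t in (0:ℝ)..h, (K / (2 * δ) * ‖g t‖ ^ 2 + K * δ / 2) := step1.trans step2
    _ = K / (2 * δ) * (∫ t in (0:ℝ)..h, ‖g t‖ ^ 2) + K * δ / 2 * h := step3

end Helpers

/-- The mean squared derivative cost function `C_{n,h}(x; y)`. -/
noncomputable def msdCost (n d : ℕ) (h : ℝ) (x y : Fin n → EuclideanSpace ℝ (Fin d)) : ℝ :=
  sInf { c : ℝ | ∃ ξ : ℝ → EuclideanSpace ℝ (Fin d), ContDiff ℝ n ξ ∧
    (∀ k : Fin n, iteratedDeriv k ξ 0 = x k ∧ iteratedDeriv k ξ h = y k) ∧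
    c = ∫ t in (0:ℝ)..h, ‖iteratedDeriv n ξ t‖ ^ 2 }

theorem msdCost_eq_zero_iff (n d : ℕ) (hn : 1 ≤ n) (hd : 1 ≤ d) (h : ℝ) (hh : 0 < h)
    (x y : Fin n → EuclideanSpace ℝ (Fin d)) :
    msdCost n d h x y = 0 ↔
      ∀ j : Fin n, y j = ∑ i : Fin n,
        if (j : ℕ) ≤ (i : ℕ) then
          (h ^ ((i : ℕ) - (j : ℕ)) / (((i : ℕ) - (j : ℕ)).factorial : ℝ)) • x i
        else 0 := by
  classical
  unfold msdCost
  set S : Set ℝ := { c : ℝ | ∃ ξ : ℝ → EuclideanSpace ℝ (Fin d), ContDiff ℝ n ξ ∧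
    (∀ k : Fin n, iteratedDeriv k ξ 0 = x k ∧ iteratedDeriv k ξ h = y k) ∧
    c = ∫ t in (0:ℝ)..h, ‖iteratedDeriv n ξ t‖ ^ 2 } with hS
  have hnonneg : ∀ c ∈ S, (0:ℝ) ≤ c := by
    rintro c ⟨ξ, -, -, rfl⟩
    exact intervalIntegral.integral_nonneg hh.le (fun t _ => by positivity)
  have hbdd : BddBelow S := ⟨0, fun c hc => hnonneg c hc⟩
  set fx : ℕ → EuclideanSpace ℝ (Fin d) := fun k => if hk : k < n then x ⟨k, hk⟩ else 0 with hfx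
  set fy : ℕ → EuclideanSpace ℝ (Fin d) := fun k => if hk : k < n then y ⟨k, hk⟩ else 0 with hfy
  have hne : S.Nonempty := by
    set φ : ℝ → ℝ := fun t => Real.smoothTransition (3 * t / h - 1) with hφ
    set Px : ℝ → EuclideanSpace ℝ (Fin d) := pser 0 fx n with hPx
    set Py : ℝ → EuclideanSpace ℝ (Fin d) := pser h fy n with hPy
    set ξ₀ : ℝ → EuclideanSpace ℝ (Fin d) := fun t => Px t + φ t • (Py t - Px t) with hξ₀
    have hφc : ContDiff ℝ (n : WithTop ℕ∞) φ := by
      have h1 : ContDiff ℝ ((n : ℕ∞) : WithTop ℕ∞) Real.smoothTransition :=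
        Real.smoothTransition.contDiff
      exact (by exact_mod_cast h1 : ContDiff ℝ (n : WithTop ℕ∞) Real.smoothTransition).comp
        (((contDiff_const.mul contDiff_id).div_const h).sub contDiff_const)
    have hc : ContDiff ℝ (n : WithTop ℕ∞) ξ₀ :=
      (contDiff_pser 0 fx n).add (hφc.smul ((contDiff_pser h fy n).sub (contDiff_pser 0 fx n)))
    have h0eq : ξ₀ =ᶠ[nhds 0] Px := by
      filter_upwards [Iio_mem_nhds (show (0:ℝ) < h/3 by linarith)] with t ht
      have hφ0 : φ t = 0 := Real.smoothTransition.zero_of_nonpos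
        (by rw [sub_nonpos, div_le_one hh]; have := Set.mem_Iio.mp ht; linarith)
      simp [hξ₀, hφ0]
    have hheq : ξ₀ =ᶠ[nhds h] Py := by
      filter_upwards [Ioi_mem_nhds (show 2*h/3 < h by linarith)] with t ht
      have hφ1 : φ t = 1 := Real.smoothTransition.one_of_one_le
        (by rw [le_sub_iff_add_le, le_div_iff₀ hh]; have := Set.mem_Ioi.mp ht; linarith)
      simp [hξ₀, hφ1]
    refine ⟨_, ξ₀, hc, fun k => ⟨?_, ?_⟩, rfl⟩
    · rw [Filter.EventuallyEq.iteratedDeriv_eq (k : ℕ) h0eq, hPx, iteratedDeriv_pser,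
        pser_self _ _ _ (by omega)]
      simp [hfx, k.isLt]
    · rw [Filter.EventuallyEq.iteratedDeriv_eq (k : ℕ) hheq, hPy, iteratedDeriv_pser,
        pser_self _ _ _ (by omega)]
      simp [hfy, k.isLt]
  constructor
  · intro h0 j
    rw [fin_target_eq h x j]
    set Q : EuclideanSpace ℝ (Fin d) := ∑ i ∈ Finset.range (n - (j : ℕ)), (h ^ i / (Nat.factorial i : ℝ)) •
      (if hk : (j : ℕ) + i < n then x ⟨(j : ℕ) + i, hk⟩ else 0) with hQ
    have key : ∀ θ : ℝ, 0 < θ → ‖y j - Q‖ ≤ θ := by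
      intro θ hθ
      set p : ℕ := n - (j : ℕ) - 1 with hp
      set K : ℝ := h ^ p / (p.factorial : ℝ) with hK
      have hKpos : 0 < K := by positivity
      set δ : ℝ := θ / (K * h) with hδ
      have hδpos : 0 < δ := by positivity
      set ε : ℝ := θ * δ / K with hε
      have hεpos : 0 < ε := by positivity
      obtain ⟨c, hcS, hce⟩ := (csInf_lt_iff hbdd hne).mp (by rw [h0]; exact hεpos)
      obtain ⟨ξ, hξc, hjets, hceq⟩ := hcS
      have hQeq : Q = ∑ i ∈ Finset.range (n - (j : ℕ)),
          (h ^ i / (Nat.factorial i : ℝ)) • iteratedDeriv ((j : ℕ) + i) ξ 0 := by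
        rw [hQ]
        refine Finset.sum_congr rfl fun i hi => ?_
        have hlt : (j : ℕ) + i < n := by simp at hi; omega
        have hj1 := (hjets ⟨(j : ℕ) + i, hlt⟩).1
        rw [dif_pos hlt]
        congr 1
        exact hj1.symm
      have hyj : y j = iteratedDeriv (j : ℕ) ξ h := ((hjets j).2).symm
      rw [hQeq, hyj, taylor_int n h ξ hξc (j : ℕ) j.isLt]
      refine le_trans (key_bound _ (hξc.continuous_iteratedDeriv n le_rfl) h δ hh hδpos p) ?_
      have hIlt : (∫ t in (0:ℝ)..h, ‖iteratedDeriv n ξ t‖ ^ 2) < ε := by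
        rw [← hceq]; exact hce
      have h1 : K / (2 * δ) * (∫ t in (0:ℝ)..h, ‖iteratedDeriv n ξ t‖ ^ 2) ≤
          K / (2 * δ) * ε := by
        exact mul_le_mul_of_nonneg_left hIlt.le (by positivity)
      have e1 : K / (2 * δ) * ε = θ / 2 := by
        rw [hε]
        field_simp
      have e2 : K * δ / 2 * h = θ / 2 := by
        rw [hδ]
        field_simp
      linarith
    by_contra hne'
    have hpos : 0 < ‖y j - Q‖ := by
      rw [norm_pos_iff, sub_ne_zero]
      exact hne'
    have := key (‖y j - Q‖ / 2) (by linarith)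
    linarith
  · intro hy
    have hmem0 : (0:ℝ) ∈ S := by
      have hzero : iteratedDeriv n (pser 0 fx n) = fun _ => (0 : EuclideanSpace ℝ (Fin d)) := by
        rw [iteratedDeriv_pser]
        funext t
        simp [pser, Nat.sub_self]
      refine ⟨pser 0 fx n, contDiff_pser _ _ _, fun k => ⟨?_, ?_⟩, ?_⟩
      · rw [iteratedDeriv_pser, pser_self _ _ _ (by omega)]
        simp [hfx, k.isLt]
      · rw [iteratedDeriv_pser, hy k, fin_target_eq h x k]
        unfold pser
        refine Finset.sum_congr rfl fun i hi => ?_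
        have hlt : (k : ℕ) + i < n := by simp at hi; omega
        rw [sub_zero]
        congr 1
        simp only [hfx]
        rw [Nat.add_comm i (k : ℕ)]
      · rw [hzero]
        simp
    exact le_antisymm (csInf_le hbdd hmem0) (le_csInf ⟨0, hmem0⟩ fun c hc => hnonneg c hc)
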